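/- Let μ be a probability measure on Ω, a subset of a finite-dimensional real inner product space, let A be a point, and define F_A(Y) = ⟨Y, A⟩ + log ∫_Ω exp(−⟨Y, X⟩) dμ(X). If Y⋆ minimizes F_A and Y° satisfies F_A(Y°) ≤ F_A(Y⋆) + ε, then the KL divergence from the Gibbs measure μ⋆ ∝ exp(−⟨Y⋆, X⟩) dμ to μ° ∝ exp(−⟨Y°, X⟩) dμ satisfies D_KL(μ⋆ ‖ μ°) = F_A(Y°) − F_A(Y⋆) ≤ ε. -/

import Mathlib

open MeasureTheory

/-- KL-closeness of approximate dual optima: with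
`F_A(Y) = ⟨Y, A⟩ + log ∫ exp(−⟨Y, X⟩) dμ`, if `Y⋆` is a global minimizer of `F_A`
(so the mean of the Gibbs measure `μ⋆ ∝ e^{−⟨Y⋆,X⟩} dμ` is `A`) and
`F_A(Y°) ≤ F_A(Y⋆) + ε`, then
`D_KL(μ⋆‖μ°) = F_A(Y°) − F_A(Y⋆) ≤ ε`. -/
theorem stmt_13 {E : Type*} [NormedAddCommGroup E] [InnerProductSpace ℝ E]
    [FiniteDimensional ℝ E] [MeasurableSpace E] [BorelSpace E]
    (μ : Measure E) [IsProbabilityMeasure μ] (A : E) (ε : ℝ)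
    (hZ : ∀ Y : E, Integrable (fun X => Real.exp (-(inner ℝ Y X : ℝ))) μ)
    (Ystar Ycirc : E)
    (F : E → ℝ)
    (hF : ∀ Y : E, F Y = (inner ℝ Y A : ℝ) +
      Real.log (∫ X, Real.exp (-(inner ℝ Y X : ℝ)) ∂μ))
    (hmin : ∀ Y : E, F Ystar ≤ F Y)
    (hmean : (∫ X, Real.exp (-(inner ℝ Ystar X : ℝ)) • X ∂μ) =
      (∫ X, Real.exp (-(inner ℝ Ystar X : ℝ)) ∂μ) • A)
    (hε : F Ycirc ≤ F Ystar + ε) :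
    (∫ X, (Real.exp (-(inner ℝ Ystar X : ℝ)) / ∫ X', Real.exp (-(inner ℝ Ystar X' : ℝ)) ∂μ) *
        Real.log ((Real.exp (-(inner ℝ Ystar X : ℝ)) / ∫ X', Real.exp (-(inner ℝ Ystar X' : ℝ)) ∂μ) /
          (Real.exp (-(inner ℝ Ycirc X : ℝ)) / ∫ X', Real.exp (-(inner ℝ Ycirc X' : ℝ)) ∂μ)) ∂μ)
      = F Ycirc - F Ystar ∧
    (∫ X, (Real.exp (-(inner ℝ Ystar X : ℝ)) / ∫ X', Real.exp (-(inner ℝ Ystar X' : ℝ)) ∂μ) *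
        Real.log ((Real.exp (-(inner ℝ Ystar X : ℝ)) / ∫ X', Real.exp (-(inner ℝ Ystar X' : ℝ)) ∂μ) /
          (Real.exp (-(inner ℝ Ycirc X : ℝ)) / ∫ X', Real.exp (-(inner ℝ Ycirc X' : ℝ)) ∂μ)) ∂μ)
      ≤ ε := by
  set Zs : ℝ := ∫ X', Real.exp (-(inner ℝ Ystar X' : ℝ)) ∂μ with hZs
  set Zc : ℝ := ∫ X', Real.exp (-(inner ℝ Ycirc X' : ℝ)) ∂μ with hZc
  have hZsp : 0 < Zs := integral_exp_pos (hZ Ystar)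
  have hZcp : 0 < Zc := integral_exp_pos (hZ Ycirc)
  -- integrability of exp(-⟨Y⋆,X⟩) * ⟨w, X⟩
  have hint1 : ∀ w : E,
      Integrable (fun X => Real.exp (-(inner ℝ Ystar X : ℝ)) * (inner ℝ w X : ℝ)) μ := by
    intro w
    have hmeas : AEStronglyMeasurable (fun X => Real.exp (-(inner ℝ Ystar X:ℝ)) * (inner ℝ w X:ℝ)) μ :=
      (((continuous_const.inner continuous_id).neg.rexp).mul
        (continuous_const.inner continuous_id)).aestronglyMeasurable
    refine Integrable.mono' ((hZ (Ystar - w)).add (hZ (Ystar + w))) hmeas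
      (Filter.Eventually.of_forall fun X => ?_)
    have h1 : |(inner ℝ w X : ℝ)| ≤ Real.exp (inner ℝ w X : ℝ) + Real.exp (-(inner ℝ w X : ℝ)) := by
      rcases abs_cases (inner ℝ w X : ℝ) with ⟨h, _⟩ | ⟨h, _⟩ <;> rw [h]
      · nlinarith [Real.add_one_le_exp (inner ℝ w X : ℝ), Real.exp_pos (-(inner ℝ w X : ℝ))]
      · nlinarith [Real.add_one_le_exp (-(inner ℝ w X : ℝ)), Real.exp_pos (inner ℝ w X : ℝ)]
    have hn : ‖Real.exp (-(inner ℝ Ystar X:ℝ)) * (inner ℝ w X:ℝ)‖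
        = Real.exp (-(inner ℝ Ystar X:ℝ)) * |(inner ℝ w X:ℝ)| := by
      rw [norm_mul, Real.norm_eq_abs, Real.norm_eq_abs, abs_of_pos (Real.exp_pos _)]
    rw [hn]
    simp only [Pi.add_apply, inner_sub_left, inner_add_left]
    have h2 : Real.exp (-((inner ℝ Ystar X:ℝ) - (inner ℝ w X:ℝ)))
        + Real.exp (-((inner ℝ Ystar X:ℝ) + (inner ℝ w X:ℝ)))
        = Real.exp (-(inner ℝ Ystar X:ℝ)) * (Real.exp (inner ℝ w X:ℝ) + Real.exp (-(inner ℝ w X:ℝ))) := by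
      rw [mul_add, ← Real.exp_add, ← Real.exp_add]; ring_nf
    rw [h2]
    exact mul_le_mul_of_nonneg_left h1 (Real.exp_pos _).le
  -- integrability of the vector-valued function
  have hintvec : Integrable (fun X => Real.exp (-(inner ℝ Ystar X : ℝ)) • X) μ := by
    let b := stdOrthonormalBasis ℝ E
    have heq : (fun X => Real.exp (-(inner ℝ Ystar X : ℝ)) • X) =
        fun X => ∑ i, (Real.exp (-(inner ℝ Ystar X : ℝ)) * (inner ℝ (b i) X : ℝ)) • (b i) := by
      funext X
      rw [← b.sum_repr' X]
      rw [Finset.smul_sum]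
      simp_rw [smul_smul, b.sum_repr' X]
    rw [heq]
    exact integrable_finset_sum _ fun i _ => (hint1 (b i)).smul_const (b i)
  -- key mean identity
  set v : E := Ycirc - Ystar with hv
  have hkey : ∫ X, Real.exp (-(inner ℝ Ystar X : ℝ)) * (inner ℝ v X : ℝ) ∂μ = Zs * (inner ℝ v A : ℝ) := by
    have h := integral_inner (𝕜 := ℝ) hintvec v
    rw [hmean] at h
    rw [real_inner_smul_right] at h
    rw [← h]
    congr 1
    funext X
    rw [real_inner_smul_right]
  -- pointwise rewriting of the KL integrand
  have hpt : (fun X => (Real.exp (-(inner ℝ Ystar X : ℝ)) / Zs) *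
        Real.log ((Real.exp (-(inner ℝ Ystar X : ℝ)) / Zs) /
          (Real.exp (-(inner ℝ Ycirc X : ℝ)) / Zc)))
      = fun X => (1/Zs) * (Real.exp (-(inner ℝ Ystar X : ℝ)) * (inner ℝ v X : ℝ))
          + ((Real.log Zc - Real.log Zs)/Zs) * Real.exp (-(inner ℝ Ystar X : ℝ)) := by
    funext X
    have hlog : Real.log ((Real.exp (-(inner ℝ Ystar X : ℝ)) / Zs) /
          (Real.exp (-(inner ℝ Ycirc X : ℝ)) / Zc))
        = (inner ℝ v X : ℝ) + (Real.log Zc - Real.log Zs) := by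
      rw [Real.log_div (by positivity) (by positivity), Real.log_div (by positivity) hZsp.ne',
        Real.log_div (by positivity) hZcp.ne', Real.log_exp, Real.log_exp, hv, inner_sub_left]
      ring
    rw [hlog]; ring
  have hKL : ∫ X, (Real.exp (-(inner ℝ Ystar X : ℝ)) / Zs) *
        Real.log ((Real.exp (-(inner ℝ Ystar X : ℝ)) / Zs) /
          (Real.exp (-(inner ℝ Ycirc X : ℝ)) / Zc)) ∂μ = F Ycirc - F Ystar := by
    rw [hpt, integral_add ((hint1 v).const_mul _) ((hZ Ystar).const_mul _),
      integral_const_mul, integral_const_mul, hkey, ← hZs]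
    rw [hF Ycirc, hF Ystar, ← hZs, ← hZc, hv, inner_sub_left]
    field_simp
    ring
  exact ⟨hKL, by rw [hKL]; linarith⟩
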